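/- Let k be a non-negative integer and let P be a finite propositional logic program such that every atom occurring negated in P is the head of some rule of P (Neg(P) ⊆ h(P)). Let P^k be the program consisting of all rules r of P with |b⁻(r)| ≤ k, and let M ⊆ At(P) be a set of atoms with |M| ≥ |P| − k. Then M is a stable model of P if and only if M is a stable model of P^k. -/
import Mathlib


open scoped Classical

noncomputable section

/-- A propositional logic program rule: a head atom, a finite positive body and a
finite negative body. -/
structure LPRule (α : Type) where
  head : α
  pos : Finset α
  neg : Finset α
deriving DecidableEq

/-- A logic program is a finite set of rules. -/
abbrev LProgram (α : Type) := Finset (LPRule α)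

variable {α : Type} [DecidableEq α]

/-- `horn r`: the Horn rule with the same head and positive body as `r`
and empty negative body. -/
def LPRule.horn (r : LPRule α) : LPRule α := ⟨r.head, r.pos, ∅⟩

/-- A rule `r` is proper if `h(r) ∉ b⁺(r)` and `b⁺(r) ∩ b⁻(r) = ∅`. -/
def LPRule.proper (r : LPRule α) : Prop := r.head ∉ r.pos ∧ r.pos ∩ r.neg = ∅

/-- `At(P)`: the set of atoms occurring in `P`. -/
def atomsP (P : LProgram α) : Finset α := P.sup (fun r => insert r.head (r.pos ∪ r.neg))

/-- `h(P)`: the set of heads of rules of `P`. -/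
def headsP (P : LProgram α) : Finset α := P.image LPRule.head

/-- `Neg(P)`: the set of atoms occurring negated in `P`. -/
def negP (P : LProgram α) : Finset α := P.sup LPRule.neg

/-- The least model of a (Horn) program `Q`, given as a set of rules (negative bodies
are ignored; Horn rules have empty negative bodies): the least set `M` of atoms such
that `h(r) ∈ M` whenever `r ∈ Q` and `b⁺(r) ⊆ M`. -/
def LM (Q : Set (LPRule α)) : Set α :=
  ⋂₀ {M : Set α | ∀ r ∈ Q, (↑r.pos : Set α) ⊆ M → r.head ∈ M}

/-- The reduct `P^S`: delete every rule whose negative body meets `S` and remove the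
negative bodies of the remaining rules. -/
def reduct (P : LProgram α) (S : Set α) : Set (LPRule α) :=
  LPRule.horn '' {r | r ∈ P ∧ (↑r.neg : Set α) ∩ S = ∅}

/-- `M` is a stable model of `P` if `M = LM (P^M)`. -/
def isStable (P : LProgram α) (M : Set α) : Prop :=
  M = LM (reduct P M)

lemma LM_subset_heads (Q : Set (LPRule α)) : LM Q ⊆ {a | ∃ r ∈ Q, r.head = a} := by
  intro a ha
  exact ha _ (fun r hr _ => ⟨r, hr, rfl⟩)

lemma reduct_eq_of_heads (k : ℕ) (P : LProgram α) (hneg : negP P ⊆ headsP P)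
    (M : Finset α) (hcard : P.card ≤ M.card + k)
    (hhead : ∀ m ∈ M, ∃ r ∈ P, r.head = m) :
    reduct P ↑M = reduct (P.filter (fun r => r.neg.card ≤ k)) ↑M := by
  have hB : (P.filter (fun r => r.head ∉ M)).card ≤ k := by
    have h1 : M ⊆ (P.filter (fun r => r.head ∈ M)).image LPRule.head := by
      intro m hm
      obtain ⟨r, hr, he⟩ := hhead m hm
      exact Finset.mem_image.2 ⟨r, Finset.mem_filter.2 ⟨hr, he ▸ hm⟩, he⟩
    have h2 : M.card ≤ (P.filter (fun r => r.head ∈ M)).card :=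
      le_trans (Finset.card_le_card h1) Finset.card_image_le
    have h3 : (P.filter (fun r => r.head ∈ M)).card
        + (P.filter (fun r => r.head ∉ M)).card = P.card :=
      Finset.card_filter_add_card_filter_not _
    omega
  have key : ∀ r ∈ P, (↑r.neg : Set α) ∩ ↑M = ∅ → r.neg.card ≤ k := by
    intro r hr hdisj
    have hsub : r.neg ⊆ (P.filter (fun r => r.head ∉ M)).image LPRule.head := by
      intro a ha
      have haM : a ∉ M := by
        intro haM
        have hmem : a ∈ (↑r.neg : Set α) ∩ ↑M := ⟨ha, haM⟩
        rw [hdisj] at hmem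
        exact hmem
      have hneg' : a ∈ negP P := Finset.mem_sup.2 ⟨r, hr, ha⟩
      obtain ⟨r', hr', he⟩ := Finset.mem_image.1 (hneg hneg')
      exact Finset.mem_image.2 ⟨r', Finset.mem_filter.2 ⟨hr', he ▸ haM⟩, he⟩
    calc r.neg.card ≤ _ := Finset.card_le_card hsub
      _ ≤ _ := Finset.card_image_le
      _ ≤ k := hB
  unfold reduct
  have hsets : {r | r ∈ P ∧ (↑r.neg : Set α) ∩ ↑M = ∅}
      = {r | r ∈ P.filter (fun r => r.neg.card ≤ k) ∧ (↑r.neg : Set α) ∩ ↑M = ∅} := by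
    ext r
    simp only [Set.mem_setOf_eq, Finset.mem_filter]
    constructor
    · rintro ⟨hr, hd⟩; exact ⟨⟨hr, key r hr hd⟩, hd⟩
    · rintro ⟨⟨hr, _⟩, hd⟩; exact ⟨hr, hd⟩
  rw [hsets]

/-- if every atom occurring negated in `P` is the head of some rule of `P`,
`P^k` consists of the rules of `P` with at most `k` negated atoms in the body, and
`M ⊆ At(P)` satisfies `|M| ≥ |P| - k`, then `M` is a stable model of `P` iff `M` is a
stable model of `P^k`. -/
theorem stable_iff_stable_boundedNeg (k : ℕ) (P : LProgram α)
    (hneg : negP P ⊆ headsP P)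
    (M : Finset α) (hM : M ⊆ atomsP P) (hcard : P.card ≤ M.card + k) :
    isStable P ↑M ↔ isStable (P.filter (fun r => r.neg.card ≤ k)) ↑M := by
  constructor
  · intro h
    have hhead : ∀ m ∈ M, ∃ r ∈ P, r.head = m := by
      intro m hm
      have : (m : α) ∈ LM (reduct P ↑M) := h ▸ (by exact_mod_cast hm)
      obtain ⟨s, hs, he⟩ := LM_subset_heads _ this
      obtain ⟨r, ⟨hrP, _⟩, rfl⟩ := hs
      exact ⟨r, hrP, he⟩
    unfold isStable
    rw [← reduct_eq_of_heads k P hneg M hcard hhead]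
    exact h
  · intro h
    have hhead : ∀ m ∈ M, ∃ r ∈ P, r.head = m := by
      intro m hm
      have : (m : α) ∈ LM (reduct (P.filter (fun r => r.neg.card ≤ k)) ↑M) :=
        h ▸ (by exact_mod_cast hm)
      obtain ⟨s, hs, he⟩ := LM_subset_heads _ this
      obtain ⟨r, ⟨hrP, _⟩, rfl⟩ := hs
      exact ⟨r, (Finset.mem_filter.1 hrP).1, he⟩
    unfold isStable
    rw [reduct_eq_of_heads k P hneg M hcard hhead]
    exact h
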